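/- Let F be a probability distribution on the reals with finite moments and let t: ℝ×ℝ → ℝ be integrable. Define μᵗ(F) = E[t(X,X) − t(X,Y)] where X, Y are independent with law F. If X_1,...,X_n is a simple random sample without replacement of size n from a finite population with empirical distribution F_N, and F_n denotes the empirical distribution of the sample, then E[μᵗ(F_n)] = ((1−n⁻¹)/(1−N⁻¹)) μᵗ(F_N). -/

import Mathlib

open Finset

/-- Expectation under simple random sampling without replacement: the average of `g`
over all ordered samples of `n` distinct indices (i.e. embeddings `Fin n ↪ Fin N`),
each equally likely. -/
noncomputable def srsExp (N n : ℕ) (g : (Fin n ↪ Fin N) → ℝ) : ℝ :=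
  (∑ σ : Fin n ↪ Fin N, g σ) / (Fintype.card (Fin n ↪ Fin N))

/-- The generalized second-order central moment
`μᵗ(F) = E[t(X,X) - t(X,Y)] = (1/m)∑ t(y_i,y_i) - (1/m²)∑∑ t(y_i,y_j)`
computed from an empirical distribution of `m` points. -/
noncomputable def muT (m : ℕ) (t : ℝ → ℝ → ℝ) (y : Fin m → ℝ) : ℝ :=
  (∑ i, t (y i) (y i)) / m - (∑ i, ∑ j, t (y i) (y j)) / (m ^ 2 : ℝ)

section aux
variable {N n : ℕ}

lemma congr_apply (π : Equiv.Perm (Fin N)) (σ : Fin n ↪ Fin N) (k : Fin n) :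
    (Equiv.embeddingCongr (Equiv.refl (Fin n)) π σ) k = π (σ k) := by
  simp [Equiv.embeddingCongr, Function.Embedding.congr]

lemma fiber1_card_eq (i : Fin n) (a b : Fin N) :
    (Finset.univ.filter fun σ : Fin n ↪ Fin N => σ i = a).card
      = (Finset.univ.filter fun σ : Fin n ↪ Fin N => σ i = b).card := by
  apply Finset.card_equiv (Equiv.embeddingCongr (Equiv.refl (Fin n)) (Equiv.swap a b))
  intro σ
  simp only [Finset.mem_filter, Finset.mem_univ, true_and, congr_apply]
  constructor
  · rintro rfl; simp
  · intro h
    have : Equiv.swap a b (σ i) = Equiv.swap a b a := by simp [h]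
    exact (Equiv.swap a b).injective this

lemma exists_perm_pair {a b a' b' : Fin N} (hab : a ≠ b) (hab' : a' ≠ b') :
    ∃ π : Equiv.Perm (Fin N), π a = a' ∧ π b = b' := by
  refine ⟨(Equiv.swap a a').trans (Equiv.swap (Equiv.swap a a' b) b'), ?_, ?_⟩
  · have h1 : Equiv.swap a a' b ≠ a' := by
      intro h
      have := (Equiv.swap a a').injective (h.trans (Equiv.swap_apply_left a a').symm)
      exact hab this.symm
    simp only [Equiv.trans_apply, Equiv.swap_apply_left]
    exact Equiv.swap_apply_of_ne_of_ne (Ne.symm h1) hab'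
  · simp only [Equiv.trans_apply, Equiv.swap_apply_left]

lemma fiber2_card_eq (i j : Fin n) {a b a' b' : Fin N} (hab : a ≠ b) (hab' : a' ≠ b') :
    (Finset.univ.filter fun σ : Fin n ↪ Fin N => σ i = a ∧ σ j = b).card
      = (Finset.univ.filter fun σ : Fin n ↪ Fin N => σ i = a' ∧ σ j = b').card := by
  obtain ⟨π, ha, hb⟩ := exists_perm_pair (N := N) hab hab'
  apply Finset.card_equiv (Equiv.embeddingCongr (Equiv.refl (Fin n)) π)
  intro σ
  simp only [Finset.mem_filter, Finset.mem_univ, true_and, congr_apply]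
  constructor
  · rintro ⟨rfl, rfl⟩; exact ⟨ha, hb⟩
  · rintro ⟨h1, h2⟩
    exact ⟨π.injective (h1.trans ha.symm), π.injective (h2.trans hb.symm)⟩

lemma sum1 (hN : 0 < N) (i : Fin n) (f : Fin N → ℝ) :
    ∑ σ : Fin n ↪ Fin N, f (σ i)
      = (Fintype.card (Fin n ↪ Fin N) : ℝ) * (∑ a, f a) / N := by
  set a0 : Fin N := ⟨0, hN⟩ with ha0
  set c := (Finset.univ.filter fun σ : Fin n ↪ Fin N => σ i = a0).card with hc
  have hfib : ∀ a : Fin N, (Finset.univ.filter fun σ : Fin n ↪ Fin N => σ i = a).card = c :=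
    fun a => fiber1_card_eq i a a0
  have h1 : ∑ σ : Fin n ↪ Fin N, f (σ i) = (c : ℝ) * ∑ a, f a := by
    rw [← Finset.sum_fiberwise' Finset.univ (fun σ : Fin n ↪ Fin N => σ i) f, Finset.mul_sum]
    refine Finset.sum_congr rfl fun a _ => ?_
    rw [Finset.sum_const, hfib a, nsmul_eq_mul]
  have h2 : Fintype.card (Fin n ↪ Fin N) = N * c := by
    rw [← Finset.card_univ,
      Finset.card_eq_sum_card_fiberwise (f := fun σ : Fin n ↪ Fin N => σ i)
        (t := Finset.univ) (fun σ _ => Finset.mem_univ _)]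
    simp [hfib, Finset.card_univ, mul_comm]
  rw [h1, h2]
  have : (N : ℝ) ≠ 0 := Nat.cast_ne_zero.mpr hN.ne'
  push_cast
  field_simp

lemma sum2 (hN : 2 ≤ N) {i j : Fin n} (hij : i ≠ j) (g : Fin N → Fin N → ℝ) :
    ∑ σ : Fin n ↪ Fin N, g (σ i) (σ j)
      = (Fintype.card (Fin n ↪ Fin N) : ℝ) * (∑ a, ∑ b, g a b - ∑ a, g a a)
          / ((N : ℝ) * ((N : ℝ) - 1)) := by
  have h01 : (⟨0, by omega⟩ : Fin N) ≠ ⟨1, by omega⟩ := by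
    simp [Fin.ext_iff]
  set c := (Finset.univ.filter fun σ : Fin n ↪ Fin N =>
      σ i = ⟨0, by omega⟩ ∧ σ j = ⟨1, by omega⟩).card with hc
  have hfib : ∀ p : Fin N × Fin N,
      (Finset.univ.filter fun σ : Fin n ↪ Fin N => (σ i, σ j) = p).card
        = if p.1 = p.2 then 0 else c := by
    rintro ⟨a, b⟩
    simp only [Prod.mk.injEq]
    by_cases hab : a = b
    · subst hab
      rw [if_pos rfl, Finset.card_eq_zero, Finset.filter_eq_empty_iff]
      rintro σ - ⟨h1, h2⟩
      exact hij (σ.injective (h1.trans h2.symm))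
    · rw [if_neg hab]
      exact fiber2_card_eq i j hab h01
  have h1 : ∑ σ : Fin n ↪ Fin N, g (σ i) (σ j)
      = ∑ p : Fin N × Fin N,
          ((if p.1 = p.2 then 0 else (c : ℝ))) * g p.1 p.2 := by
    rw [← Finset.sum_fiberwise' Finset.univ
      (fun σ : Fin n ↪ Fin N => (σ i, σ j)) (fun p => g p.1 p.2)]
    refine Finset.sum_congr rfl fun p _ => ?_
    rw [Finset.sum_const, hfib p, nsmul_eq_mul]
    split_ifs <;> push_cast <;> ring
  have h2 : (Fintype.card (Fin n ↪ Fin N) : ℝ) = (N : ℝ) * ((N : ℝ) - 1) * c := by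
    have := Finset.card_eq_sum_card_fiberwise
      (f := fun σ : Fin n ↪ Fin N => (σ i, σ j)) (t := Finset.univ)
      (s := Finset.univ) (fun σ _ => Finset.mem_univ _)
    rw [Finset.card_univ] at this
    have : (Fintype.card (Fin n ↪ Fin N) : ℝ)
        = ∑ p : Fin N × Fin N, ((if p.1 = p.2 then 0 else (c : ℝ))) := by
      rw [this]
      push_cast
      refine Finset.sum_congr rfl fun p _ => ?_
      rw [hfib p]
      split_ifs <;> simp
    rw [this, Fintype.sum_prod_type]
    have hrow : ∀ a : Fin N,
        (∑ b : Fin N, (if a = b then 0 else (c : ℝ))) = (N : ℝ) * c - c := by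
      intro a
      have : ∀ b : Fin N, (if a = b then 0 else (c : ℝ))
          = (c : ℝ) - (if a = b then (c : ℝ) else 0) := by
        intro b; split_ifs <;> ring
      simp only [this, Finset.sum_sub_distrib, Finset.sum_const, Finset.card_univ,
        Fintype.card_fin, nsmul_eq_mul, Finset.sum_ite_eq, Finset.mem_univ, if_pos]
    simp only [hrow, Finset.sum_const, Finset.card_univ, Fintype.card_fin, nsmul_eq_mul]
    ring
  have hN0 : (N : ℝ) ≠ 0 := Nat.cast_ne_zero.mpr (by omega)
  have hN1 : (N : ℝ) - 1 ≠ 0 := by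
    have : (2 : ℝ) ≤ (N : ℝ) := by exact_mod_cast hN
    linarith
  rw [h1, h2]
  have hdiag : ∑ p : Fin N × Fin N, ((if p.1 = p.2 then 0 else (c : ℝ))) * g p.1 p.2
      = (c : ℝ) * (∑ a, ∑ b, g a b - ∑ a, g a a) := by
    rw [Fintype.sum_prod_type]
    have : ∀ a b : Fin N, (if a = b then 0 else (c : ℝ)) * g a b
        = (c : ℝ) * g a b - (if a = b then (c : ℝ) * g a b else 0) := by
      intro a b; split_ifs <;> ring
    simp only [this, Finset.sum_sub_distrib, Finset.sum_ite_eq, Finset.mem_univ, if_pos,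
      ← Finset.mul_sum]
    ring
  rw [hdiag]
  field_simp

end aux


/-- The generalized second-order central moment is an eigenfunction:
`E[μᵗ(F_n)] = ((1 - n⁻¹)/(1 - N⁻¹)) μᵗ(F_N)` under SRSWOR. -/
theorem srs_muT_eigen (N n : ℕ) (hn : 2 ≤ n) (hnN : n ≤ N)
    (t : ℝ → ℝ → ℝ) (x : Fin N → ℝ) :
    srsExp N n (fun σ => muT n t (fun i => x (σ i)))
      = ((1 - (n : ℝ)⁻¹) / (1 - (N : ℝ)⁻¹)) * muT N t x := by
  have hN2 : 2 ≤ N := hn.trans hnN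
  have hNpos : 0 < N := by omega
  set E : ℕ := Fintype.card (Fin n ↪ Fin N) with hE
  have hEpos : 0 < E := @Fintype.card_pos _ _ ⟨Fin.castLEEmb hnN⟩
  set S1 : ℝ := ∑ a, t (x a) (x a) with hS1
  set S2 : ℝ := ∑ a, ∑ b, t (x a) (x b) with hS2
  set D : ℝ := (E : ℝ) * S1 / N with hD
  set O : ℝ := (E : ℝ) * (S2 - S1) / ((N : ℝ) * ((N : ℝ) - 1)) with hO
  have hA : ∑ σ : Fin n ↪ Fin N, ∑ i, t (x (σ i)) (x (σ i)) = (n : ℝ) * D := by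
    rw [Finset.sum_comm]
    have h : ∀ i : Fin n, ∑ σ : Fin n ↪ Fin N, t (x (σ i)) (x (σ i)) = D := by
      intro i
      exact sum1 hNpos i (fun a => t (x a) (x a))
    rw [Finset.sum_congr rfl fun i _ => h i, Finset.sum_const, Finset.card_univ,
      Fintype.card_fin, nsmul_eq_mul]
  have hB : ∑ σ : Fin n ↪ Fin N, ∑ i, ∑ j, t (x (σ i)) (x (σ j))
      = (n : ℝ) * D + (n : ℝ) * ((n : ℝ) - 1) * O := by
    rw [Finset.sum_comm]
    have key : ∀ i : Fin n, ∑ σ : Fin n ↪ Fin N, ∑ j, t (x (σ i)) (x (σ j))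
        = (n : ℝ) * O + (D - O) := by
      intro i
      rw [Finset.sum_comm]
      have : ∀ j : Fin n, ∑ σ : Fin n ↪ Fin N, t (x (σ i)) (x (σ j))
          = O + (if i = j then D - O else 0) := by
        intro j
        by_cases hij : i = j
        · subst hij
          rw [if_pos rfl]
          rw [sum1 (n := n) hNpos i (fun a => t (x a) (x a))]
          have h9 : O + (D - O) = D := by ring
          rw [h9, hD, hE, hS1]
        · rw [if_neg hij]
          rw [sum2 (n := n) hN2 hij (fun a b => t (x a) (x b)), add_zero, hO, hE, hS1, hS2]
      simp only [this, Finset.sum_add_distrib, Finset.sum_const, Finset.card_univ,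
        Fintype.card_fin, nsmul_eq_mul, Finset.sum_ite_eq, Finset.mem_univ, if_pos]
    have hsum : ∑ i : Fin n, ((n : ℝ) * O + (D - O)) = (n : ℝ) * ((n : ℝ) * O + (D - O)) := by
      rw [Finset.sum_const, Finset.card_univ, Fintype.card_fin, nsmul_eq_mul]
    rw [Finset.sum_congr rfl fun i _ => key i, hsum]
    ring
  have hn0 : (n : ℝ) ≠ 0 := Nat.cast_ne_zero.mpr (by omega)
  have hN0 : (N : ℝ) ≠ 0 := Nat.cast_ne_zero.mpr (by omega)
  have hN1 : (N : ℝ) - 1 ≠ 0 := by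
    have : (2 : ℝ) ≤ (N : ℝ) := by exact_mod_cast hN2
    linarith
  have hE0 : (E : ℝ) ≠ 0 := Nat.cast_ne_zero.mpr hEpos.ne'
  have hNi : 1 - (N : ℝ)⁻¹ ≠ 0 := by
    rw [sub_ne_zero]
    intro h
    have : (N : ℝ) = 1 := by
      field_simp at h
      linarith [h]
    have : (2 : ℝ) ≤ (N : ℝ) := by exact_mod_cast hN2
    linarith
  unfold srsExp muT
  rw [← hE]
  rw [Finset.sum_sub_distrib, ← Finset.sum_div, ← Finset.sum_div, hA, hB]
  rw [hD, hO]
  field_simp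
  ring
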